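/- Let ρ = ⌈a₁/d⌉ with ρ ≥ 3, and suppose every prime factor of a₁ is greater than or equal to ρ. Then Σ_{j=1}^{ρ} ε_j·(j·d − a₁) ≥ −d·C(ρ,2)·⌊ω₁/a₁⌋ − d·C(ρ−1,2), where C(n,2) denotes the binomial coefficient n choose 2 and the sum is computed in ℤ. -/
import Mathlib


namespace Stmt12Aux

def Ap (S : Set ℕ) (a1 : ℕ) : Set ℕ := {w ∈ S | ¬ ∃ s ∈ S, s + a1 = w}

lemma add_mul_mem {S : Set ℕ} {a1 : ℕ} (ha1S : a1 ∈ S)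
    (hadd : ∀ s ∈ S, ∀ t ∈ S, s + t ∈ S) :
    ∀ t : ℕ, ∀ s ∈ S, s + t * a1 ∈ S := by
  intro t
  induction t with
  | zero => simpa
  | succ n ih =>
    intro s hs
    have h := hadd _ (ih s hs) _ ha1S
    have e : s + n * a1 + a1 = s + (n+1) * a1 := by ring
    rwa [e] at h

lemma ap_rep {S : Set ℕ} {a1 : ℕ} (ha1 : 0 < a1) :
    ∀ s ∈ S, ∃ w ∈ Ap S a1, ∃ t, s = w + t * a1 := by
  intro s
  induction s using Nat.strong_induction_on with
  | _ s ih =>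
    intro hs
    by_cases h : ∃ s' ∈ S, s' + a1 = s
    · obtain ⟨s', hs', he⟩ := h
      obtain ⟨w, hw, t, ht⟩ := ih s' (by omega) hs'
      refine ⟨w, hw, t+1, ?_⟩
      rw [add_mul, one_mul]
      omega
    · exact ⟨s, ⟨hs, h⟩, 0, by simp⟩

lemma ap_mod_inj_le {S : Set ℕ} {a1 : ℕ} (ha1 : 0 < a1) (ha1S : a1 ∈ S)
    (hadd : ∀ s ∈ S, ∀ t ∈ S, s + t ∈ S)
    {w w' : ℕ} (hw : w ∈ Ap S a1) (hw' : w' ∈ Ap S a1)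
    (hmod : w % a1 = w' % a1) (hle : w ≤ w') : w = w' := by
  have hdvd : a1 ∣ w' - w := (Nat.modEq_iff_dvd' hle).mp hmod
  obtain ⟨t, ht⟩ := hdvd
  rcases Nat.eq_zero_or_pos t with h0 | hpos
  · subst h0; simp at ht; omega
  · exfalso
    apply hw'.2
    refine ⟨w + (t-1) * a1, add_mul_mem ha1S hadd _ _ hw.1, ?_⟩
    obtain ⟨n, rfl⟩ := Nat.exists_eq_succ_of_ne_zero (by omega : t ≠ 0)
    have e : a1 * (n + 1) = n * a1 + a1 := by ring
    simp only [Nat.succ_eq_add_one] at ht ⊢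
    simp only [Nat.add_sub_cancel]
    omega

lemma ap_mod_inj {S : Set ℕ} {a1 : ℕ} (ha1 : 0 < a1) (ha1S : a1 ∈ S)
    (hadd : ∀ s ∈ S, ∀ t ∈ S, s + t ∈ S)
    {w w' : ℕ} (hw : w ∈ Ap S a1) (hw' : w' ∈ Ap S a1)
    (hmod : w % a1 = w' % a1) : w = w' := by
  rcases le_total w w' with h | h
  · exact ap_mod_inj_le ha1 ha1S hadd hw hw' hmod h
  · exact (ap_mod_inj_le ha1 ha1S hadd hw' hw hmod.symm h).symm


lemma ncard_interval {S : Set ℕ} {a1 : ℕ} (ha1 : 0 < a1) (ha1S : a1 ∈ S)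
    (hadd : ∀ s ∈ S, ∀ t ∈ S, s + t ∈ S) (ω : ℕ → ℕ)
    (hω_mono : ∀ i j, i < j → j < a1 → ω i < ω j)
    (hω_range : ω '' Set.Iio a1 = Ap S a1) (k : ℕ) :
    (Set.Icc (k*a1) ((k+1)*a1 - 1) ∩ S).ncard = {i | i < a1 ∧ ω i / a1 ≤ k}.ncard := by
  have hωap : ∀ i, i < a1 → ω i ∈ Ap S a1 := by
    intro i hi
    rw [← hω_range]
    exact ⟨i, hi, rfl⟩
  have hval : ∀ i, i < a1 → ω i / a1 ≤ k → k * a1 + ω i % a1 = ω i + (k - ω i / a1) * a1 := by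
    intro i hi hk
    have h1 := Nat.div_add_mod (ω i) a1
    have h2 : (k - ω i / a1) * a1 = k * a1 - (ω i / a1) * a1 := Nat.sub_mul _ _ _
    have h3 : (ω i / a1) * a1 ≤ k * a1 := Nat.mul_le_mul_right _ hk
    have h4 : (ω i / a1) * a1 = a1 * (ω i / a1) := Nat.mul_comm _ _
    omega
  have himg : Set.Icc (k*a1) ((k+1)*a1 - 1) ∩ S
      = (fun i => k*a1 + ω i % a1) '' {i | i < a1 ∧ ω i / a1 ≤ k} := by
    ext s
    constructor
    · rintro ⟨⟨hlo, hhi⟩, hsS⟩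
      have hlt : s < (k+1) * a1 := by
        have : 0 < (k+1) * a1 := Nat.mul_pos (Nat.succ_pos k) ha1
        omega
      have hsk : s / a1 = k := Nat.div_eq_of_lt_le hlo hlt
      obtain ⟨w, hw, t, ht⟩ := ap_rep ha1 s hsS
      obtain ⟨i, hi, hωi⟩ := by rw [← hω_range] at hw; exact hw
      have hi' : i < a1 := hi
      have hws : w ≤ s := by omega
      have hqi : ω i / a1 ≤ k := by
        rw [hωi, ← hsk]
        exact Nat.div_le_div_right hws
      refine ⟨i, ⟨hi', hqi⟩, ?_⟩
      have hmod : ω i % a1 = s % a1 := by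
        rw [hωi, ht]
        exact (Nat.add_mul_mod_self_right w t a1).symm
      have hdm := Nat.div_add_mod s a1
      rw [hsk] at hdm
      have hc : a1 * k = k * a1 := Nat.mul_comm _ _
      simp only []
      omega
    · rintro ⟨i, ⟨hi, hk⟩, hv⟩
      simp only [] at hv
      subst hv
      have hmem : k * a1 + ω i % a1 ∈ S := by
        rw [hval i hi hk]
        exact add_mul_mem ha1S hadd _ _ (hωap i hi).1
      have hmlt : ω i % a1 < a1 := Nat.mod_lt _ ha1
      have he : (k+1) * a1 = k * a1 + a1 := by ring
      refine ⟨⟨Nat.le_add_right _ _, ?_⟩, hmem⟩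
      omega
  rw [himg]
  apply Set.ncard_image_of_injOn
  intro i hi j hj hij
  simp only [Set.mem_setOf_eq] at hi hj
  have hij' : k*a1 + ω i % a1 = k*a1 + ω j % a1 := hij
  have hmod : ω i % a1 = ω j % a1 := by omega
  have hω' : ω i = ω j := ap_mod_inj ha1 ha1S hadd (hωap i hi.1) (hωap j hj.1) hmod
  rcases lt_trichotomy i j with h | h | h
  · exact absurd (hω_mono i j h hj.1) (by omega)
  · exact h
  · exact absurd (hω_mono j i h hi.1) (by omega)

lemma count_iff {q : ℕ → ℕ} {a1 j : ℕ}
    (hmono : ∀ i i', i ≤ i' → i' < a1 → q i ≤ q i')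
    (h1 : 1 ≤ j) (hj : j < a1) (k : ℕ) :
    {i | i < a1 ∧ q i ≤ k}.ncard = j ↔ (q (j-1) ≤ k ∧ k < q j) := by
  have hfin : {i | i < a1 ∧ q i ≤ k}.Finite :=
    Set.Finite.subset (Set.finite_Iio a1) (fun i hi => hi.1)
  have hIio : ∀ n : ℕ, (Set.Iio n).ncard = n := fun n => by
    rw [← Finset.coe_range, Set.ncard_coe_finset, Finset.card_range]
  constructor
  · intro hn
    constructor
    · by_contra hlt
      push_neg at hlt
      have hsub : {i | i < a1 ∧ q i ≤ k} ⊆ Set.Iio (j-1) := by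
        intro i hi
        simp only [Set.mem_setOf_eq] at hi
        simp only [Set.mem_Iio]
        by_contra hge
        push_neg at hge
        exact absurd (le_trans (hmono (j-1) i hge hi.1) hi.2) (by omega)
      have := Set.ncard_le_ncard hsub (Set.finite_Iio _)
      rw [hIio] at this
      omega
    · by_contra hge
      push_neg at hge
      have hsub : Set.Iio (j+1) ⊆ {i | i < a1 ∧ q i ≤ k} := by
        intro i hi
        simp only [Set.mem_Iio] at hi
        have hia : i < a1 := by omega
        exact ⟨hia, le_trans (hmono i j (by omega) hj) hge⟩
      have := Set.ncard_le_ncard hsub hfin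
      rw [hIio] at this
      omega
  · rintro ⟨hle, hlt⟩
    have : {i | i < a1 ∧ q i ≤ k} = Set.Iio j := by
      ext i
      simp only [Set.mem_setOf_eq, Set.mem_Iio]
      constructor
      · rintro ⟨hia, hqi⟩
        by_contra hge
        push_neg at hge
        exact absurd (le_trans (hmono j i hge hia) hqi) (by omega)
      · intro hij
        exact ⟨by omega, le_trans (hmono i (j-1) (by omega) (by omega)) hle⟩
    rw [this, hIio]


lemma order_ge {a1 ω1 ρ : ℕ} (ha1 : 0 < a1) (hω1 : 0 < ω1)
    (hnd : ¬ a1 ∣ ω1) (hprimes : ∀ p : ℕ, p.Prime → p ∣ a1 → ρ ≤ p)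
    {u : ℕ} (hu : 0 < u) (huρ : u < ρ) (hdvd : a1 ∣ u * ω1) : False := by
  set g := Nat.gcd a1 ω1 with hg
  have hgpos : 0 < g := Nat.gcd_pos_of_pos_left _ ha1
  set o := a1 / g with ho
  have hopos : 0 < o := Nat.div_pos (Nat.le_of_dvd ha1 (Nat.gcd_dvd_left _ _)) hgpos
  have hoa : o ∣ a1 := Nat.div_dvd_of_dvd (Nat.gcd_dvd_left _ _)
  have h1 : g * o = a1 := Nat.mul_div_cancel' (Nat.gcd_dvd_left _ _)
  have h2 : g * (ω1 / g) = ω1 := Nat.mul_div_cancel' (Nat.gcd_dvd_right _ _)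
  have ho1 : o ≠ 1 := by
    intro h
    apply hnd
    have : a1 = g := by rw [h, mul_one] at h1; omega
    exact this ▸ Nat.gcd_dvd_right a1 ω1
  have hco : Nat.Coprime o (ω1 / g) := Nat.coprime_div_gcd_div_gcd hgpos
  have hou : o ∣ u := by
    apply hco.dvd_of_dvd_mul_right
    have key : g * o ∣ g * (u * (ω1 / g)) := by
      rw [h1]
      have : g * (u * (ω1 / g)) = u * (g * (ω1 / g)) := by ring
      rw [this, h2]
      exact hdvd
    exact (Nat.mul_dvd_mul_iff_left hgpos).mp key
  have hρo : ρ ≤ o := by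
    have hp := Nat.minFac_prime ho1
    have := hprimes _ hp (dvd_trans (Nat.minFac_dvd o) hoa)
    have := Nat.minFac_le hopos
    omega
  have := Nat.le_of_dvd hu hou
  omega

lemma sum_prev (M : ℕ → ℤ) (hM0 : M 0 = 0) (n : ℕ) :
    ∑ j ∈ Finset.Icc 1 n, M j = ∑ j ∈ Finset.Icc 1 (n-1), M j + M n := by
  cases n with
  | zero => simp [hM0]
  | succ m =>
    simp only [Nat.add_sub_cancel]
    exact Finset.sum_Icc_succ_top (by omega) M

lemma abel (M : ℕ → ℤ) (hM0 : M 0 = 0) (D A : ℤ) :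
    ∀ n : ℕ, ∑ j ∈ Finset.Icc 1 n, (M j - M (j-1)) * ((j:ℤ) * D - A)
      = M n * ((n:ℤ) * D - A) - D * ∑ j ∈ Finset.Icc 1 (n-1), M j := by
  intro n
  induction n with
  | zero => simp [hM0]
  | succ m ih =>
    rw [Finset.sum_Icc_succ_top (by omega : 1 ≤ m + 1), ih]
    have e1 : (m + 1) - 1 = m := rfl
    rw [e1, sum_prev M hM0 m]
    push_cast
    ring

lemma gauss1 : ∀ n : ℕ, ∑ j ∈ Finset.Icc 1 n, j = (n+1).choose 2 := by
  intro n
  induction n with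
  | zero => simp
  | succ m ih =>
    rw [Finset.sum_Icc_succ_top (by omega : 1 ≤ m + 1), ih]
    have := Nat.choose_succ_succ (m+1) 1
    simp [Nat.choose_one_right] at this
    omega

lemma gauss2 : ∀ n : ℕ, ∑ j ∈ Finset.Icc 1 n, (j - 1) = n.choose 2 := by
  intro n
  induction n with
  | zero => simp
  | succ m ih =>
    rw [Finset.sum_Icc_succ_top (by omega : 1 ≤ m + 1), ih]
    have := Nat.choose_succ_succ m 1
    simp [Nat.choose_one_right] at this
    omega


end Stmt12Aux

open Stmt12Aux in
theorem stmt12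
    (d : ℕ) (hd : 2 ≤ d)
    (a : Fin d → ℕ)
    (ha_pos : ∀ i, 0 < a i)
    (ha_mono : StrictMono a)
    (ha_gcd : Finset.univ.gcd a = 1)
    (a1 : ℕ) (ha1 : a1 = a ⟨0, by omega⟩)
    (S : Set ℕ)
    (hS : S = {m : ℕ | ∃ c : Fin d → ℕ, m = ∑ i, c i * a i})
    (hmin : ∀ j : Fin d, ¬ ∃ c : Fin d → ℕ, c j = 0 ∧ a j = ∑ i, c i * a i)
    (F : ℕ) (hF : F ∉ S) (hFmax : ∀ m : ℕ, F < m → m ∈ S)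
    (ω : ℕ → ℕ)
    (hω_mono : ∀ i j : ℕ, i < j → j < a1 → ω i < ω j)
    (hω_range : ω '' Set.Iio a1 = {w ∈ S | ¬ ∃ s ∈ S, s + a1 = w})
    (Q R : ℕ) (hQR : F + 1 = Q * a1 + R) (hR2 : 2 ≤ R) (hRa : R ≤ a1)
    (I : ℕ → Set ℕ) (hI : ∀ k, I k = Set.Icc (k * a1) ((k + 1) * a1 - 1))
    (ε : ℕ → ℕ) (hε : ∀ j, ε j = {k : ℕ | k < Q ∧ (I k ∩ S).ncard = j}.ncard)
    (ρ : ℕ) (hρ : (ρ : ℤ) = ⌈(a1 : ℚ) / (d : ℚ)⌉) (hρ3 : 3 ≤ ρ)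
    (hprimes : ∀ p : ℕ, p.Prime → p ∣ a1 → ρ ≤ p)
    :
    -((d : ℤ) * (ρ.choose 2 : ℤ) * ((ω 1 / a1 : ℕ) : ℤ)) - (d : ℤ) * (((ρ - 1).choose 2 : ℕ) : ℤ)
      ≤ ∑ j ∈ Finset.Icc 1 ρ, (ε j : ℤ) * ((j : ℤ) * (d : ℤ) - (a1 : ℤ)) := by
  classical
  have ha1pos : 0 < a1 := ha1 ▸ ha_pos _
  -- S basics
  have h0S : (0:ℕ) ∈ S := by
    rw [hS]; exact ⟨fun _ => 0, by simp⟩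
  have hSadd : ∀ s ∈ S, ∀ t ∈ S, s + t ∈ S := by
    rw [hS]
    rintro s ⟨c, rfl⟩ t ⟨c', rfl⟩
    exact ⟨c + c', by simp [add_mul, Finset.sum_add_distrib]⟩
  have ha1S : a1 ∈ S := by
    rw [hS, ha1]
    refine ⟨fun i => if i = ⟨0, by omega⟩ then 1 else 0, ?_⟩
    simp [ite_mul]
  -- rho facts
  have hd0 : (0:ℚ) < (d:ℚ) := by positivity
  have h2d : 2 * d < a1 := by
    have h1 : (2:ℤ) < ⌈(a1 : ℚ) / (d : ℚ)⌉ := by omega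
    have h2 : (2:ℚ) < (a1 : ℚ) / (d : ℚ) := by exact_mod_cast Int.lt_ceil.mp h1
    have h3 : (2:ℚ) * d < a1 := (lt_div_iff₀ hd0).mp h2
    exact_mod_cast h3
  have hρd : a1 ≤ ρ * d := by
    have h1 : (a1 : ℚ) / (d : ℚ) ≤ ((ρ:ℤ) : ℚ) := hρ ▸ Int.le_ceil _
    have h2 : (a1 : ℚ) ≤ (ρ : ℚ) * d := by
      rw [div_le_iff₀ hd0] at h1; exact_mod_cast h1
    exact_mod_cast h2
  have hρa1 : ρ < a1 := by
    have ha2 : (5:ℚ) ≤ (a1:ℚ) := by exact_mod_cast (by omega : 5 ≤ a1)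
    have hd2 : (2:ℚ) ≤ (d:ℚ) := by exact_mod_cast hd
    have h1 : (a1 : ℚ) / (d : ℚ) ≤ ((a1:ℤ) - 1 : ℤ) := by
      rw [div_le_iff₀ hd0]
      push_cast
      nlinarith
    have h2 : (ρ:ℤ) ≤ (a1:ℤ) - 1 := hρ ▸ Int.ceil_le.mpr h1
    omega
  -- Apery
  have hrange : ω '' Set.Iio a1 = Ap S a1 := hω_range
  have hωap : ∀ i, i < a1 → ω i ∈ Ap S a1 := by
    intro i hi; rw [← hrange]; exact ⟨i, hi, rfl⟩
  have hωS : ∀ i, i < a1 → ω i ∈ S := fun i hi => (hωap i hi).1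
  have hω0 : ω 0 = 0 := by
    have h0A : (0:ℕ) ∈ Ap S a1 := ⟨h0S, by rintro ⟨s, hs, h⟩; omega⟩
    rw [← hrange] at h0A
    obtain ⟨i, hi, hωi⟩ := h0A
    simp only [Set.mem_Iio] at hi
    rcases Nat.eq_zero_or_pos i with rfl | hpos
    · exact hωi
    · exact absurd (hω_mono 0 i hpos hi) (by omega)
  have hω1pos : 0 < ω 1 := by
    have := hω_mono 0 1 one_pos (by omega)
    omega
  -- q
  set q : ℕ → ℕ := fun i => ω i / a1 with hqdef
  have hq0 : q 0 = 0 := by simp [hqdef, hω0]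
  have hqmono : ∀ i i', i ≤ i' → i' < a1 → q i ≤ q i' := by
    intro i i' h hi'
    rcases eq_or_lt_of_le h with rfl | hlt
    · exact le_refl _
    · exact Nat.div_le_div_right (le_of_lt (hω_mono _ _ hlt hi'))
  -- epsilon formula
  have hnk : ∀ k, (I k ∩ S).ncard = {i | i < a1 ∧ q i ≤ k}.ncard := by
    intro k
    rw [hI k]
    exact ncard_interval ha1pos ha1S hSadd ω hω_mono hrange k
  have hεm : ∀ j, 1 ≤ j → j ≤ ρ → ε j = min (q j) Q - min (q (j-1)) Q := by
    intro j h1 hj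
    rw [hε j]
    have hset : {k : ℕ | k < Q ∧ (I k ∩ S).ncard = j} = Set.Ico (q (j-1)) (min (q j) Q) := by
      ext k
      rw [Set.mem_setOf_eq, Set.mem_Ico, hnk k, count_iff hqmono h1 (by omega) k]
      omega
    rw [hset, ← Finset.coe_Ico, Set.ncard_coe_finset, Nat.card_Ico]
    have := hqmono (j-1) j (by omega) (by omega)
    omega
  -- multiples of ω 1
  have hω1S : ω 1 ∈ S := hωS 1 (by omega)
  have hmulS : ∀ n : ℕ, n * ω 1 ∈ S := by
    intro n
    induction n with
    | zero => simpa using h0S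
    | succ m ih =>
      have h := hSadd _ ih _ hω1S
      have e : m * ω 1 + ω 1 = (m+1) * ω 1 := by ring
      rwa [e] at h
  have hna : ¬ a1 ∣ ω 1 := by
    rintro ⟨t, ht⟩
    have htpos : 1 ≤ t := by
      rcases Nat.eq_zero_or_pos t with rfl | h
      · simp at ht; omega
      · omega
    apply (hωap 1 (by omega)).2
    refine ⟨0 + (t-1) * a1, add_mul_mem ha1S hSadd (t-1) 0 h0S, ?_⟩
    obtain ⟨n, rfl⟩ := Nat.exists_eq_add_of_le htpos
    have e : a1 * (1 + n) = n * a1 + a1 := by ring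
    simp only [Nat.add_sub_cancel_left] 
    omega
  -- pigeonhole: ω j ≤ j * ω 1
  have hωle : ∀ j, 1 ≤ j → j + 1 ≤ ρ → ω j ≤ j * ω 1 := by
    intro j hj1 hjρ
    by_contra hgt
    push_neg at hgt
    have hja : j < a1 := by omega
    have hrep : ∀ i : ℕ, ∃ ι, ι < a1 ∧ ω ι ≤ i * ω 1 ∧ ω ι % a1 = (i * ω 1) % a1 := by
      intro i
      obtain ⟨w, hw, t, ht⟩ := ap_rep ha1pos _ (hmulS i)
      have hw' := hw
      rw [← hrange] at hw'
      obtain ⟨ι, hι, hωι⟩ := hw'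
      simp only [Set.mem_Iio] at hι
      refine ⟨ι, hι, by omega, ?_⟩
      rw [hωι, ht]
      exact (Nat.add_mul_mod_self_right w t a1).symm
    choose f hf1 hf2 hf3 using hrep
    have hinj : ∀ i i', i ≤ j → i' ≤ j → i < i' → f i ≠ f i' := by
      intro i i' hi hi' hlt heq
      have hmodeq : (i * ω 1) % a1 = (i' * ω 1) % a1 := by
        rw [← hf3 i, ← hf3 i', heq]
      have hdvd : a1 ∣ (i' - i) * ω 1 := by
        have h := (Nat.modEq_iff_dvd' (Nat.mul_le_mul_right _ (le_of_lt hlt))).mp hmodeq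
        rwa [← Nat.sub_mul] at h
      exact order_ge ha1pos hω1pos hna hprimes (by omega) (by omega : i' - i < ρ) hdvd
    have hmaps : ∀ i, i ≤ j → f i < j := by
      intro i hi
      have h1 : ω (f i) ≤ i * ω 1 := hf2 i
      have h2 : i * ω 1 ≤ j * ω 1 := Nat.mul_le_mul_right _ hi
      by_contra hge
      push_neg at hge
      rcases eq_or_lt_of_le hge with heq | hlt
      · rw [← heq] at h1; omega
      · exact absurd (hω_mono j (f i) hlt (hf1 i)) (by omega)
    have hcard : (Finset.range (j+1)).card ≤ (Finset.range j).card :=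
      Finset.card_le_card_of_injOn f
      (fun i hi => Finset.mem_range.mpr (hmaps i (Nat.lt_succ_iff.mp (Finset.mem_range.mp hi))))
      (by
        intro x hx y hy hxy
        simp only [Finset.coe_range, Set.mem_Iio] at hx hy
        by_contra hne
        rcases Nat.lt_or_ge x y with h | h
        · exact hinj x y (by omega) (by omega) h hxy
        · exact hinj y x (by omega) (by omega) (by omega) hxy.symm)
    simp only [Finset.card_range] at hcard
    omega
  -- q bound
  have hqb : ∀ j, 1 ≤ j → j + 1 ≤ ρ → q j ≤ j * q 1 + (j - 1) := by
    intro j h1 h2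
    have h3 : ω j ≤ j * ω 1 := hωle j h1 h2
    have h4 : q j ≤ (j * ω 1) / a1 := Nat.div_le_div_right h3
    have h5 := Nat.div_add_mod (ω 1) a1
    have h6 : j * ω 1 = a1 * (j * q 1) + j * (ω 1 % a1) := by
      have e : a1 * (j * q 1) + j * (ω 1 % a1) = j * (a1 * q 1 + ω 1 % a1) := by ring
      rw [e]
      simp only [hqdef]
      rw [h5]
    have h7 : (j * ω 1) / a1 = j * q 1 + (j * (ω 1 % a1)) / a1 := by
      rw [h6, Nat.mul_add_div ha1pos]
    have h8 : j * (ω 1 % a1) / a1 < j := by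
      rw [Nat.div_lt_iff_lt_mul ha1pos]
      have hr : ω 1 % a1 < a1 := Nat.mod_lt _ ha1pos
      exact mul_lt_mul_of_pos_left hr (by omega)
    omega
  -- assemble
  set M : ℕ → ℤ := fun j => ((min (q j) Q : ℕ) : ℤ) with hMdef
  have hM0 : M 0 = 0 := by simp [hMdef, hq0]
  have hcast : ∀ j ∈ Finset.Icc 1 ρ,
      (ε j : ℤ) * ((j:ℤ) * (d:ℤ) - (a1:ℤ)) = (M j - M (j-1)) * ((j:ℤ) * (d:ℤ) - (a1:ℤ)) := by
    intro j hj
    simp only [Finset.mem_Icc] at hj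
    rw [hεm j hj.1 hj.2]
    congr 1
    have hle : min (q (j-1)) Q ≤ min (q j) Q := by
      have := hqmono (j-1) j (by omega) (by omega)
      omega
    rw [Nat.cast_sub hle]
  rw [Finset.sum_congr rfl hcast, abel M hM0 (d:ℤ) (a1:ℤ) ρ]
  have hMρ : 0 ≤ M ρ * ((ρ:ℤ) * (d:ℤ) - (a1:ℤ)) := by
    apply mul_nonneg
    · simp [hMdef]
    · have : (a1:ℤ) ≤ (ρ:ℤ) * (d:ℤ) := by exact_mod_cast hρd
      omega
  have hNat : ∑ j ∈ Finset.Icc 1 (ρ-1), (j * q 1 + (j-1)) = ρ.choose 2 * q 1 + (ρ-1).choose 2 := by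
    rw [Finset.sum_add_distrib, ← Finset.sum_mul, gauss1 (ρ-1), gauss2 (ρ-1)]
    have e : ρ - 1 + 1 = ρ := by omega
    rw [e]
  have hsum : ∑ j ∈ Finset.Icc 1 (ρ-1), M j ≤ ((ρ.choose 2 * q 1 + (ρ-1).choose 2 : ℕ) : ℤ) := by
    rw [← hNat]
    push_cast [Nat.cast_sum]
    apply Finset.sum_le_sum
    intro j hj
    simp only [Finset.mem_Icc] at hj
    have hb := hqb j hj.1 (by omega)
    have hm : M j ≤ (q j : ℤ) := by
      simp only [hMdef]
      exact_mod_cast Nat.min_le_left _ _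
    have : (q j : ℤ) ≤ (j:ℤ) * (q 1 : ℤ) + ((j:ℤ) - 1) := by
      have := hb
      have hc : ((j * q 1 + (j - 1) : ℕ) : ℤ) = (j:ℤ) * (q 1 : ℤ) + ((j:ℤ) - 1) := by
        push_cast [Nat.cast_sub hj.1]
        ring
      calc (q j : ℤ) ≤ ((j * q 1 + (j - 1) : ℕ) : ℤ) := by exact_mod_cast hb
        _ = _ := hc
    have hcast2 : ((j : ℕ) : ℤ) - 1 = ((j - 1 : ℕ) : ℤ) := by
      push_cast [Nat.cast_sub hj.1]; ring
    calc M j ≤ (q j : ℤ) := hm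
      _ ≤ (j:ℤ) * (q 1 : ℤ) + ((j:ℤ) - 1) := this
      _ = (j:ℤ) * (q 1 : ℤ) + ((j - 1 : ℕ) : ℤ) := by rw [hcast2]
  have hq1goal : (ω 1 / a1 : ℕ) = q 1 := rfl
  rw [hq1goal]
  have hdpos : (0:ℤ) ≤ (d:ℤ) := by positivity
  have hmul := mul_le_mul_of_nonneg_left hsum hdpos
  push_cast at hmul ⊢
  linarith [hMρ, hmul]
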